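/- Let \mathfrak{g}_1 and \mathfrak{g}_2 be Lie algebras acting canonically on a symplectic manifold (M,\omega), admitting infinitesimally equivariant momentum maps J_1: M \to \mathfrak{g}_1^* and J_2: M \to \mathfrak{g}_2^*. Then the following three conditions are equivalent: (i) (\mathfrak{g}_2)_M \subseteq \ker TJ_1; (ii) (\mathfrak{g}_1)_M \subseteq \ker TJ_2; (iii) \omega(\xi_M, \eta_M) = 0 for all \xi \in \mathfrak{g}_1 and \eta \in \mathfrak{g}_2. Moreover, if these conditions hold, then the pair of momentum maps (J_1, J_2) is a weak dual pair and the two Lie algebra actions commute: [\xi_M, \eta_M] = 0 for all \xi \in \mathfrak{g}_1, \eta \in \mathfrak{g}_2. -/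
import Mathlib


/-!
STATEMENT 0 (Proposition 2.1 in "Dual pairs in fluid dynamics").

We work in an abstract model of a (possibly infinite-dimensional, weak) symplectic
manifold: points form a type `M`, all tangent spaces are identified with a fixed
real vector space `V` (as in a chart / trivialization), the symplectic form is a
point-dependent alternating weakly nondegenerate bilinear form, and the exterior
differential `d` of real-valued functions as well as the Lie bracket `bkt` of
vector fields are given as data, with the properties relevant for the statement
recorded as hypotheses:

* `a1, a2` are the infinitesimal generator maps of two canonical Lie algebra
  actions of `g1, g2` (canonicity is recorded through `hcanon`:
  `i_{[ξ_M,η_M]} ω = d(-ω(ξ_M,η_M))`, valid for symplectic vector fields);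
* `J1, J2` are momentum maps (`hJ1`, `hJ2`: `d⟨J,ξ⟩ = i_{ξ_M}ω`), infinitesimally
  equivariant (`heq1`, `heq2`: `⟨J,[ξ,η]⟩ = ω(ξ_M,η_M)`);
* `kerTJ1 m`, `kerTJ2 m` are the kernels of the tangent maps of the momentum
  maps, i.e. the tangent vectors annihilated by `d⟨J,ξ⟩` for all `ξ`.

Conclusion: (i) `(g2)_M ⊆ ker TJ1`, (ii) `(g1)_M ⊆ ker TJ2` and
(iii) `ω(ξ_M,η_M) = 0` for all `ξ ∈ g1, η ∈ g2` are equivalent; and if they hold,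
the pair `(J1, J2)` is a weak dual pair (`(ker TJ1)^ω ⊆ ker TJ2` and
`(ker TJ2)^ω ⊆ ker TJ1`) and the two actions commute: `[ξ_M, η_M] = 0`.
-/

/-- The symplectic orthogonal (as a set) of a set `A` of tangent vectors,
relative to the bilinear form `ω`. -/
def sympOrth {V : Type*} (ω : V → V → ℝ) (A : Set V) : Set V :=
  {v | ∀ w ∈ A, ω v w = 0}

theorem statement0
    (M : Type*) (V : Type*) [AddCommGroup V] [Module ℝ V]
    -- the symplectic form, alternating and (weakly) nondegenerate
    (ω : M → V →ₗ[ℝ] V →ₗ[ℝ] ℝ)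
    (halt : ∀ m v, ω m v v = 0)
    (hnondeg : ∀ m v, (∀ w, ω m v w = 0) → v = 0)
    -- exterior differential of functions on M
    (d : (M → ℝ) → M → V →ₗ[ℝ] ℝ)
    (hd0 : d (fun _ => (0 : ℝ)) = fun _ => 0)
    -- Lie bracket of vector fields on M
    (bkt : (M → V) → (M → V) → (M → V))
    -- the Lie algebras g1, g2 and their infinitesimal actions on M
    (g1 : Type*) [LieRing g1] [LieAlgebra ℝ g1]
    (g2 : Type*) [LieRing g2] [LieAlgebra ℝ g2]
    (a1 : g1 → M → V) (a2 : g2 → M → V)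
    -- canonicity of the actions: i_{[ξ_M,η_M]} ω = d(-ω(ξ_M,η_M))
    (hcanon : ∀ (ξ : g1) (η : g2) (m : M),
      ω m (bkt (a1 ξ) (a2 η) m) = d (fun m' => -(ω m' (a1 ξ m') (a2 η m'))) m)
    -- the momentum maps : d⟨J,ξ⟩ = i_{ξ_M}ω
    (J1 : M → g1 → ℝ) (J2 : M → g2 → ℝ)
    (hJ1 : ∀ (ξ : g1) (m : M), d (fun m' => J1 m' ξ) m = ω m (a1 ξ m))
    (hJ2 : ∀ (η : g2) (m : M), d (fun m' => J2 m' η) m = ω m (a2 η m))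
    -- infinitesimal equivariance : ⟨J,[ξ,η]⟩ = ω(ξ_M,η_M)
    (heq1 : ∀ (ξ ξ' : g1) (m : M), J1 m ⁅ξ, ξ'⁆ = ω m (a1 ξ m) (a1 ξ' m))
    (heq2 : ∀ (η η' : g2) (m : M), J2 m ⁅η, η'⁆ = ω m (a2 η m) (a2 η' m))
    -- kernels of the tangent maps of the momentum maps
    (kerTJ1 kerTJ2 : M → Set V)
    (hker1 : ∀ m, kerTJ1 m = {v | ∀ ξ : g1, d (fun m' => J1 m' ξ) m v = 0})
    (hker2 : ∀ m, kerTJ2 m = {v | ∀ η : g2, d (fun m' => J2 m' η) m v = 0}) :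
    -- (i) ↔ (ii) and (i) ↔ (iii)
    (((∀ m (η : g2), a2 η m ∈ kerTJ1 m) ↔ (∀ m (ξ : g1), a1 ξ m ∈ kerTJ2 m)) ∧
     ((∀ m (η : g2), a2 η m ∈ kerTJ1 m) ↔
       (∀ (ξ : g1) (η : g2) (m : M), ω m (a1 ξ m) (a2 η m) = 0))) ∧
    -- moreover, under these conditions, (J1, J2) is a weak dual pair and the
    -- Lie algebra actions commute
    ((∀ m (η : g2), a2 η m ∈ kerTJ1 m) →
      ((∀ m, sympOrth (fun v w => ω m v w) (kerTJ1 m) ⊆ kerTJ2 m) ∧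
       (∀ m, sympOrth (fun v w => ω m v w) (kerTJ2 m) ⊆ kerTJ1 m) ∧
       (∀ (ξ : g1) (η : g2) (m : M), bkt (a1 ξ) (a2 η) m = 0))) := by
  -- antisymmetry of ω
  have hskew : ∀ m v w, ω m v w = -ω m w v := by
    intro m v w
    have h := halt m (v + w)
    simp only [map_add, LinearMap.add_apply, halt] at h
    linarith
  -- membership characterizations
  have hmem1 : ∀ m v, v ∈ kerTJ1 m ↔ ∀ ξ : g1, ω m (a1 ξ m) v = 0 := by
    intro m v
    rw [hker1]
    constructor <;> intro h ξ <;> have := h ξ <;> rw [hJ1] at * <;> assumption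
  have hmem2 : ∀ m v, v ∈ kerTJ2 m ↔ ∀ η : g2, ω m (a2 η m) v = 0 := by
    intro m v
    rw [hker2]
    constructor <;> intro h η <;> have := h η <;> rw [hJ2] at * <;> assumption
  have hiii : (∀ m (η : g2), a2 η m ∈ kerTJ1 m) ↔
      (∀ (ξ : g1) (η : g2) (m : M), ω m (a1 ξ m) (a2 η m) = 0) := by
    constructor
    · intro h ξ η m
      exact (hmem1 m (a2 η m)).mp (h m η) ξ
    · intro h m η
      exact (hmem1 m (a2 η m)).mpr fun ξ => h ξ η m
  have hii : (∀ m (η : g2), a2 η m ∈ kerTJ1 m) ↔ (∀ m (ξ : g1), a1 ξ m ∈ kerTJ2 m) := by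
    rw [hiii]
    constructor
    · intro h m ξ
      refine (hmem2 m (a1 ξ m)).mpr fun η => ?_
      rw [hskew, h ξ η m, neg_zero]
    · intro h ξ η m
      rw [hskew]
      have := (hmem2 m (a1 ξ m)).mp (h m ξ) η
      rw [this, neg_zero]
  refine ⟨⟨hii, hiii⟩, fun h => ⟨?_, ?_, ?_⟩⟩
  · intro m v hv
    refine (hmem2 m v).mpr fun η => ?_
    have := hv (a2 η m) (h m η)
    simp only at this
    rw [hskew]; linarith
  · intro m v hv
    refine (hmem1 m v).mpr fun ξ => ?_
    have hξ := (hii.mp h) m ξ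
    have := hv (a1 ξ m) hξ
    simp only at this
    rw [hskew]; linarith
  · intro ξ η m
    have h0 : ∀ ξ' η' m', ω m' (a1 ξ' m') (a2 η' m') = 0 := fun ξ' η' m' =>
      hiii.mp h ξ' η' m'
    have hfun : (fun m' => -(ω m' (a1 ξ m') (a2 η m'))) = fun _ => (0 : ℝ) := by
      funext m'; rw [h0, neg_zero]
    have := hcanon ξ η m
    rw [hfun, hd0] at this
    refine hnondeg m _ fun w => ?_
    rw [this]
    rfl
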